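/- If G is a connected convex bipartite graph with at least one edge, then pb(G) = 1 and, therefore, pl(G) ≤ 2. -/

import Mathlib

open SimpleGraph

variable {V : Type*}

/-- A path-decomposition of `G`: a finite sequence of bags `X 0, …, X (q-1)` such that
every vertex is in some bag, every edge has both ends in some bag, and
`X i ∩ X k ⊆ X j` whenever `i ≤ j ≤ k`. -/
def IsPathDecomp (G : SimpleGraph V) {q : ℕ} (X : Fin q → Set V) : Prop :=
  (∀ v : V, ∃ i, v ∈ X i) ∧
  (∀ u v : V, G.Adj u v → ∃ i, u ∈ X i ∧ v ∈ X i) ∧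
  (∀ i j k : Fin q, i ≤ j → j ≤ k → X i ∩ X k ⊆ X j)

/-- The length of the path-decomposition `X` is at most `l`:
every two vertices in a common bag are at distance at most `l` in `G`. -/
def DecompLengthLE (G : SimpleGraph V) {q : ℕ} (X : Fin q → Set V) (l : ℕ) : Prop :=
  ∀ i, ∀ u ∈ X i, ∀ v ∈ X i, G.dist u v ≤ l

/-- The breadth of the path-decomposition `X` is at most `r`:
every bag is contained in a disk of radius `r` of `G`. -/
def DecompBreadthLE (G : SimpleGraph V) {q : ℕ} (X : Fin q → Set V) (r : ℕ) : Prop :=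
  ∀ i, ∃ c : V, ∀ u ∈ X i, G.dist c u ≤ r

/-- The path-length `pl(G)`: minimum length over all path-decompositions of `G`. -/
noncomputable def pathLength (G : SimpleGraph V) : ℕ :=
  sInf {l | ∃ (q : ℕ) (X : Fin q → Set V), IsPathDecomp G X ∧ DecompLengthLE G X l}

/-- The path-breadth `pb(G)`: minimum breadth over all path-decompositions of `G`. -/
noncomputable def pathBreadth (G : SimpleGraph V) : ℕ :=
  sInf {r | ∃ (q : ℕ) (X : Fin q → Set V), IsPathDecomp G X ∧ DecompBreadthLE G X r}

/-- The path-width `pw(G)`: minimum over all path-decompositions of (max bag size − 1). -/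
noncomputable def pathWidth (G : SimpleGraph V) : ℕ :=
  sInf {w | ∃ (q : ℕ) (X : Fin q → Set V), IsPathDecomp G X ∧ ∀ i, (X i).ncard ≤ w + 1}

/-- `f` is a non-contractive embedding of `G` into the line with distortion at most `k`. -/
def IsLineEmbedding (G : SimpleGraph V) (k : ℕ) (f : V → ℝ) : Prop :=
  ∀ x y : V, (G.dist x y : ℝ) ≤ |f x - f y| ∧ |f x - f y| ≤ (k : ℝ) * (G.dist x y : ℝ)

/-- The minimum line-distortion `ld(G)`. -/
noncomputable def lineDistortion (G : SimpleGraph V) : ℕ :=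
  sInf {k | ∃ f : V → ℝ, IsLineEmbedding G k f}

/-- The bandwidth `bw(G)`: minimum over all layouts (bijections of the vertices
with `{0, …, n-1}`) of the maximum stretch of an edge. -/
noncomputable def bandwidth (G : SimpleGraph V) [Fintype V] : ℕ :=
  sInf {b | ∃ f : V ≃ Fin (Fintype.card V),
    ∀ u v : V, G.Adj u v → Nat.dist (f u : ℕ) (f v : ℕ) ≤ b}

/-- Every path of `G` from `a` to `b` meets the disk of radius `lam` around `c`. -/
def Intercepts (G : SimpleGraph V) (lam : ℕ) (c a b : V) : Prop :=
  ∀ p : G.Walk a b, p.IsPath → ∃ z ∈ p.support, G.dist c z ≤ lam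

/-- The walk `p` avoids the closed neighborhood of `c`. -/
def WalkAvoids (G : SimpleGraph V) {x y : V} (p : G.Walk x y) (c : V) : Prop :=
  ∀ z ∈ p.support, z ≠ c ∧ ¬ G.Adj c z

/-- `a, b, c` form an asteroidal triple of `G`: pairwise non-adjacent, and every two
of them are joined by a path avoiding the closed neighborhood of the third. -/
def IsAsteroidalTriple (G : SimpleGraph V) (a b c : V) : Prop :=
  a ≠ b ∧ a ≠ c ∧ b ≠ c ∧ ¬ G.Adj a b ∧ ¬ G.Adj a c ∧ ¬ G.Adj b c ∧
  (∃ p : G.Walk a b, p.IsPath ∧ WalkAvoids G p c) ∧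
  (∃ p : G.Walk a c, p.IsPath ∧ WalkAvoids G p b) ∧
  (∃ p : G.Walk b c, p.IsPath ∧ WalkAvoids G p a)

/-- `G` is AT-free: it has no asteroidal triple. -/
def ATFree (G : SimpleGraph V) : Prop :=
  ∀ a b c : V, ¬ IsAsteroidalTriple G a b c

/-- `G` is a convex bipartite graph: its vertices split into two independent sets `A`, `B`
(all edges join `A` to `B`) and there is a linear ordering of `A` such that for every
`v ∈ B` the neighbors of `v` form a consecutive block of `A`. -/
def IsConvexBipartite (G : SimpleGraph V) : Prop :=
  ∃ A B : Set V,
    (∀ v : V, v ∈ A ∨ v ∈ B) ∧ (∀ v : V, ¬(v ∈ A ∧ v ∈ B)) ∧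
    (∀ u v : V, G.Adj u v → ((u ∈ A ∧ v ∈ B) ∨ (u ∈ B ∧ v ∈ A))) ∧
    ∃ g : V → ℝ, Set.InjOn g A ∧
      ∀ v ∈ B, ∀ u₁ ∈ A, ∀ u₂ ∈ A, ∀ u₃ ∈ A,
        g u₁ ≤ g u₂ → g u₂ ≤ g u₃ → G.Adj u₁ v → G.Adj u₃ v → G.Adj u₂ v

theorem stmt18 [Fintype V] (G : SimpleGraph V) (hG : G.Connected)
    (hconv : IsConvexBipartite G) (hedge : ∃ u v : V, G.Adj u v) :
    pathBreadth G = 1 ∧ pathLength G ≤ 2 := by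
  classical
  obtain ⟨A, B, hcover, hdisj, hAB, g, hginj, hconvx⟩ := hconv
  have hAindep : ∀ a ∈ A, ∀ a' ∈ A, ¬ G.Adj a a' := by
    intro a ha a' ha' hadj
    rcases hAB a a' hadj with ⟨_, h2⟩ | ⟨h1, _⟩
    · exact hdisj a' ⟨ha', h2⟩
    · exact hdisj a ⟨ha, h1⟩
  have hBnbr : ∀ b ∈ B, ∃ a ∈ A, G.Adj a b := by
    intro b hb
    obtain ⟨u0, v0, h0⟩ := hedge
    obtain ⟨w⟩ := hG.preconnected b u0
    have hz : ∃ z, G.Adj b z := by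
      cases w with
      | nil => exact ⟨v0, h0⟩
      | cons h _ => exact ⟨_, h⟩
    obtain ⟨z, hz⟩ := hz
    rcases hAB b z hz with ⟨h1, _⟩ | ⟨_, h2⟩
    · exact absurd ⟨h1, hb⟩ (hdisj b)
    · exact ⟨z, h2, hz.symm⟩
  set l : List V := A.toFinset.toList.mergeSort (fun a b => decide (g a ≤ g b)) with hldef
  have hlperm : l.Perm A.toFinset.toList :=
    List.mergeSort_perm A.toFinset.toList _
  have hmem : ∀ v, v ∈ l ↔ v ∈ A := by
    intro v
    rw [hlperm.mem_iff, Finset.mem_toList, Set.mem_toFinset]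
  have hnodup : l.Nodup := hlperm.nodup_iff.mpr A.toFinset.nodup_toList
  have hpair : l.Pairwise (fun a b => decide (g a ≤ g b) = true) :=
    List.pairwise_mergeSort (le := fun a b => decide (g a ≤ g b))
      (fun a b c h1 h2 =>
        decide_eq_true (le_trans (of_decide_eq_true h1) (of_decide_eq_true h2)))
      (fun a b => by simp [le_total (g a) (g b)])
      A.toFinset.toList
  have hsorted : ∀ i j : Fin l.length, i ≤ j → g (l.get i) ≤ g (l.get j) := by
    intro i j hij
    rcases eq_or_lt_of_le hij with h | h
    · simp [h]
    · exact of_decide_eq_true (List.pairwise_iff_get.mp hpair i j h)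
  have hgetA : ∀ i : Fin l.length, l.get i ∈ A := fun i => (hmem _).mp (l.get_mem i)
  set X : Fin l.length → Set V :=
    fun i => {v | v = l.get i ∨ G.Adj (l.get i) v} with hX
  have hdecomp : IsPathDecomp G X := by
    refine ⟨?_, ?_, ?_⟩
    · intro v
      rcases hcover v with hv | hv
      · obtain ⟨i, hi⟩ := List.mem_iff_get.mp ((hmem v).mpr hv)
        exact ⟨i, Or.inl hi.symm⟩
      · obtain ⟨a, ha, hav⟩ := hBnbr v hv
        obtain ⟨i, hi⟩ := List.mem_iff_get.mp ((hmem a).mpr ha)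
        exact ⟨i, Or.inr (hi ▸ hav)⟩
    · intro u v huv
      rcases hAB u v huv with ⟨hu, _⟩ | ⟨_, hv⟩
      · obtain ⟨i, hi⟩ := List.mem_iff_get.mp ((hmem u).mpr hu)
        exact ⟨i, Or.inl hi.symm, Or.inr (hi ▸ huv)⟩
      · obtain ⟨i, hi⟩ := List.mem_iff_get.mp ((hmem v).mpr hv)
        exact ⟨i, Or.inr (hi ▸ huv.symm), Or.inl hi.symm⟩
    · intro i j k hij hjk v ⟨hvi, hvk⟩
      rcases hvi with h1 | h1 <;> rcases hvk with h2 | h2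
      · have : i = k := hnodup.get_inj_iff.mp (h1 ▸ h2 : l.get i = l.get k)
        have hji : j = i := le_antisymm (this ▸ hjk) hij
        exact hji ▸ Or.inl h1
      · exact absurd (h1 ▸ h2) (hAindep _ (hgetA k) _ (hgetA i))
      · exact absurd (h2 ▸ h1) (hAindep _ (hgetA i) _ (hgetA k))
      · have hvB : v ∈ B := by
          rcases hcover v with hv | hv
          · exact absurd h1 (hAindep _ (hgetA i) _ hv)
          · exact hv
        exact Or.inr (hconvx v hvB _ (hgetA i) _ (hgetA j) _ (hgetA k)
          (hsorted i j hij) (hsorted j k hjk) h1 h2)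
  have hbreadth : DecompBreadthLE G X 1 := by
    intro i
    refine ⟨l.get i, fun u hu => ?_⟩
    rcases hu with h | h
    · simp [h, SimpleGraph.dist_self]
    · calc G.dist (l.get i) u ≤ (SimpleGraph.Walk.cons h SimpleGraph.Walk.nil).length :=
            SimpleGraph.dist_le _
        _ = 1 := by simp
  have h1mem : 1 ∈ {r | ∃ (q : ℕ) (Y : Fin q → Set V), IsPathDecomp G Y ∧ DecompBreadthLE G Y r} :=
    ⟨l.length, X, hdecomp, hbreadth⟩
  have h0not : 0 ∉ {r | ∃ (q : ℕ) (Y : Fin q → Set V), IsPathDecomp G Y ∧ DecompBreadthLE G Y r} := by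
    rintro ⟨q, Y, hdec, hbr⟩
    obtain ⟨u, v, huv⟩ := hedge
    obtain ⟨i, hui, hvi⟩ := hdec.2.1 u v huv
    obtain ⟨c, hc⟩ := hbr i
    have hu : c = u := hG.dist_eq_zero_iff.mp (Nat.le_zero.mp (hc u hui))
    have hv : c = v := hG.dist_eq_zero_iff.mp (Nat.le_zero.mp (hc v hvi))
    exact huv.ne (hu ▸ hv)
  constructor
  · refine le_antisymm (Nat.sInf_le h1mem) ?_
    rw [Nat.one_le_iff_ne_zero]
    intro h
    rcases Nat.sInf_eq_zero.mp h with h | h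
    · exact h0not h
    · exact absurd h1mem (h ▸ Set.notMem_empty 1)
  · have hlen : DecompLengthLE G X 2 := by
      intro i u hu v hv
      obtain ⟨c, hc⟩ := hbreadth i
      calc G.dist u v ≤ G.dist u c + G.dist c v := hG.dist_triangle
        _ ≤ 1 + 1 := by
            have h1 := hc u hu
            have h2 := hc v hv
            rw [SimpleGraph.dist_comm] at h1
            omega
        _ = 2 := rfl
    exact Nat.sInf_le ⟨l.length, X, hdecomp, hlen⟩
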